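/- arXiv:math/0407428 — 2 statements merged into one kernel-verified Lean document; each statement's English description precedes it below -/
import Mathlib

section
/- For all real numbers x, y with 0 ≤ x ≤ 1 and 0 ≤ y ≤ 1, min{x,y} = 8 · ∑_{n ≥ 1, n odd} sin(nπx/2)·sin(nπy/2) / (π²n²). -/
open Real

lemma cos_series (t : ℝ) (ht : t ∈ Set.Icc (0:ℝ) 1) :
    HasSum (fun n : ℕ => Real.cos (2*π*n*t) / (n:ℝ)^2) (π^2*(t^2 - t + 1/6)) := by
  have h := hasSum_one_div_nat_pow_mul_cos (k:=1) one_ne_zero ht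
  convert h using 1
  · funext n
    norm_num [one_div, inv_mul_eq_div]
  · norm_num [Polynomial.bernoulli, Finset.sum_range_succ, bernoulli]
    ring

def oddEquiv : ℕ ≃ {n : ℕ // Odd n} where
  toFun k := ⟨2*k+1, ⟨k, by ring⟩⟩
  invFun n := n.1 / 2
  left_inv k := by show (2*k+1)/2 = k; omega
  right_inv n := Subtype.ext (by
    show 2*(n.1/2)+1 = n.1
    obtain ⟨m, hm⟩ := n.2
    omega)

lemma hasSum_cos_odd (t : ℝ) (ht : t ∈ Set.Icc (0:ℝ) 2) :
    HasSum (fun n : {n : ℕ // Odd n} => Real.cos ((n:ℕ) * π * t / 2) / ((n:ℕ):ℝ)^2)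
      (π^2 * (1-t) / 8) := by
  obtain ⟨ht0, ht2⟩ := ht
  set f : ℕ → ℝ := fun n => Real.cos ((n:ℝ) * π * t / 2) / (n:ℝ)^2 with hf
  have hT : HasSum f (π^2 * ((t/4)^2 - t/4 + 1/6)) := by
    have h := cos_series (t/4) ⟨by linarith, by linarith⟩
    have heq : (fun n : ℕ => Real.cos (2*π*n*(t/4)) / (n:ℝ)^2) = f := by
      funext n
      simp only [hf]
      rw [show 2*π*(n:ℝ)*(t/4) = (n:ℝ)*π*t/2 by ring]
    rwa [heq] at h
  have hE : HasSum (fun n : ℕ => f (2*n)) (π^2 * ((t/2)^2 - t/2 + 1/6) / 4) := by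
    have h := (cos_series (t/2) ⟨by linarith, by linarith⟩).div_const 4
    have heq : (fun n : ℕ => Real.cos (2*π*n*(t/2)) / (n:ℝ)^2 / 4)
        = fun n : ℕ => f (2*n) := by
      funext n
      have hc : ((2*n : ℕ) : ℝ) = 2 * (n:ℝ) := by push_cast; ring
      simp only [hf, hc]
      rw [div_div, show 2*π*(n:ℝ)*(t/2) = 2*(n:ℝ)*π*t/2 by ring,
        show (n:ℝ)^2*4 = (2*(n:ℝ))^2 by ring]
    rwa [heq] at h
  have hsum : Summable f := hT.summable
  have hinj : Function.Injective (fun n : ℕ => 2*n+1) := by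
    intro a b h
    have h' : 2*a+1 = 2*b+1 := h
    omega
  have hOsum : Summable (fun n : ℕ => f (2*n+1)) := hsum.comp_injective hinj
  have hO := hOsum.hasSum
  have htot := hE.even_add_odd hO
  have hval : ∑' n : ℕ, f (2*n+1)
      = π^2 * ((t/4)^2 - t/4 + 1/6) - π^2 * ((t/2)^2 - t/2 + 1/6) / 4 := by
    have := hT.unique htot
    linarith
  rw [hval] at hO
  have hO' : HasSum (fun n : ℕ => f (2*n+1)) (π^2 * (1-t) / 8) := by
    convert hO using 1; ring
  apply (Equiv.hasSum_iff oddEquiv).mp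
  have heq : ((fun n : {n : ℕ // Odd n} =>
      Real.cos ((n:ℕ) * π * t / 2) / ((n:ℕ):ℝ)^2) ∘ oddEquiv)
      = fun n : ℕ => f (2*n+1) := by
    funext n
    simp only [hf, Function.comp, oddEquiv]
    norm_num
  rw [heq]
  exact hO'

theorem min_eq_fourier_series (x y : ℝ) (hx : x ∈ Set.Icc (0:ℝ) 1)
    (hy : y ∈ Set.Icc (0:ℝ) 1) :
    min x y = 8 * ∑' n : {n : ℕ // Odd n},
      Real.sin ((n : ℕ) * Real.pi * x / 2) * Real.sin ((n : ℕ) * Real.pi * y / 2)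
        / (Real.pi ^ 2 * (n : ℕ) ^ 2) := by
  obtain ⟨hx0, hx1⟩ := hx
  obtain ⟨hy0, hy1⟩ := hy
  have hπ : (π:ℝ) ≠ 0 := Real.pi_ne_zero
  have ha : |x - y| ∈ Set.Icc (0:ℝ) 2 :=
    ⟨abs_nonneg _, by rcases abs_cases (x - y) with ⟨h, _⟩ | ⟨h, _⟩ <;> linarith⟩
  have hb : x + y ∈ Set.Icc (0:ℝ) 2 := ⟨by linarith, by linarith⟩
  have h := ((hasSum_cos_odd _ ha).sub (hasSum_cos_odd _ hb)).div_const (2 * π^2)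
  have hkey : HasSum (fun n : {n : ℕ // Odd n} =>
      Real.sin ((n : ℕ) * Real.pi * x / 2) * Real.sin ((n : ℕ) * Real.pi * y / 2)
        / (Real.pi ^ 2 * (n : ℕ) ^ 2)) (min x y / 8) := by
    have hmin : (π^2 * (1 - |x-y|) / 8 - π^2 * (1 - (x+y)) / 8) / (2 * π^2)
        = min x y / 8 := by
      have hm : min x y = ((x + y) - |x - y|) / 2 := by
        rcases le_total x y with h' | h'
        · rw [min_eq_left h', abs_of_nonpos (by linarith)]; ring
        · rw [min_eq_right h', abs_of_nonneg (by linarith)]; ring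
      rw [hm]
      field_simp
      ring
    rw [← hmin]
    convert h using 1
    · rfl
    funext n
    have hcos : Real.cos ((n:ℕ) * π * |x - y| / 2) = Real.cos ((n:ℕ) * π * (x - y) / 2) := by
      rcases abs_cases (x - y) with ⟨h', _⟩ | ⟨h', _⟩
      · rw [h']
      · rw [h', show ((n:ℕ):ℝ) * π * -(x-y) / 2 = -(((n:ℕ):ℝ) * π * (x-y) / 2) by ring,
          Real.cos_neg]
    have h2 : Real.cos ((n:ℕ) * π * (x - y) / 2) - Real.cos ((n:ℕ) * π * (x + y) / 2)
        = 2 * (Real.sin ((n:ℕ) * π * x / 2) * Real.sin ((n:ℕ) * π * y / 2)) := by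
      rw [Real.cos_sub_cos]
      rw [show (((n:ℕ):ℝ) * π * (x-y) / 2 + ((n:ℕ):ℝ) * π * (x+y) / 2) / 2
          = ((n:ℕ):ℝ) * π * x / 2 by ring]
      rw [show (((n:ℕ):ℝ) * π * (x-y) / 2 - ((n:ℕ):ℝ) * π * (x+y) / 2) / 2
          = -(((n:ℕ):ℝ) * π * y / 2) by ring]
      rw [Real.sin_neg]
      ring
    rw [hcos, div_sub_div_same, h2]
    ring
  rw [hkey.tsum_eq]
  ring
end

section
/- For any finite connected weighted graph G, ∑ over edges e of Lₑ/(Rₑ + Lₑ) = 1 + #E(G) − #V(G), where for each edge e with endpoints y,z, Lₑ is its length (reciprocal of its weight), and Rₑ is the effective resistance between y and z in the graph G with edge e deleted (Rₑ = ∞, with Lₑ/(Rₑ+Lₑ) interpreted as 0, if deleting e disconnects y from z). Here the sum over vertex valences satisfies ∑ₚ nₚ = 2#E(G). -/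
open Classical
open Matrix

def lapMatrix {V : Type} [Fintype V] [DecidableEq V] (w : V → V → ℝ) :
    Matrix V V ℝ :=
  fun i j => if i = j then ∑ k, w i k else -(w i j)

def dirac {V : Type} [DecidableEq V] (a b : V) : V → ℝ :=
  fun v => (if v = a then 1 else 0) - (if v = b then 1 else 0)

def deleteEdge {V : Type} [DecidableEq V] (w : V → V → ℝ) (e : V × V) :
    V → V → ℝ :=
  fun i j => if (i = e.1 ∧ j = e.2) ∨ (i = e.2 ∧ j = e.1) then 0 else w i j

variable {V : Type} [Fintype V] [DecidableEq V]

lemma lap_mulVec (w : V → V → ℝ) (hdiag : ∀ i, w i i = 0) (x : V → ℝ) (i : V) :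
    (lapMatrix w).mulVec x i = (∑ k, w i k * x i) - ∑ j, w i j * x j := by
  unfold lapMatrix Matrix.mulVec dotProduct
  have : ∀ j, (if i = j then ∑ k, w i k else -(w i j)) * x j
      = (if i = j then (∑ k, w i k) * x j + w i j * x j else 0) - w i j * x j := by
    intro j
    by_cases h : i = j <;> simp [h] <;> ring
  rw [Finset.sum_congr rfl (fun j _ => this j), Finset.sum_sub_distrib,
    Finset.sum_ite_eq (Finset.univ) i
      (fun j => (∑ k, w i k) * x j + w i j * x j)]
  simp [hdiag i, Finset.sum_mul]

lemma lap_transpose (w : V → V → ℝ) (hsym : ∀ i j, w i j = w j i) :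
    (lapMatrix w)ᵀ = lapMatrix w := by
  ext i j
  unfold lapMatrix Matrix.transpose
  by_cases h : i = j
  · subst h; simp
  · simp only [Matrix.of_apply]
    rw [if_neg (Ne.symm h), if_neg h, hsym]

lemma lap_quad (w : V → V → ℝ) (hsym : ∀ i j, w i j = w j i)
    (hdiag : ∀ i, w i i = 0) (x : V → ℝ) :
    x ⬝ᵥ (lapMatrix w).mulVec x = (1/2) * ∑ i, ∑ j, w i j * (x i - x j)^2 := by
  unfold dotProduct
  have h1 : ∀ i, x i * (lapMatrix w).mulVec x i
      = (∑ j, w i j * x i * x i) - ∑ j, w i j * x i * x j := by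
    intro i
    rw [lap_mulVec w hdiag, mul_sub, Finset.mul_sum, Finset.mul_sum]
    congr 1 <;> exact Finset.sum_congr rfl (fun j _ => by ring)
  rw [Finset.sum_congr rfl (fun i _ => h1 i)]
  have h2 : ∑ i, ∑ j, w i j * (x i - x j)^2
      = (∑ i, ∑ j, w i j * x i * x i) + (∑ i, ∑ j, w i j * x j * x j)
        - 2 * ∑ i, ∑ j, w i j * x i * x j := by
    simp only [Finset.mul_sum, ← Finset.sum_add_distrib, ← Finset.sum_sub_distrib]
    exact Finset.sum_congr rfl fun i _ => Finset.sum_congr rfl fun j _ => by ring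
  have h3 : (∑ i, ∑ j, w i j * x j * x j) = ∑ i, ∑ j, w i j * x i * x i := by
    rw [Finset.sum_comm]
    exact Finset.sum_congr rfl fun i _ => Finset.sum_congr rfl fun j _ => by
      rw [hsym]
  rw [Finset.sum_sub_distrib, h2, h3]
  ring

lemma quad_zero (w : V → V → ℝ) (hnonneg : ∀ i j, 0 ≤ w i j) (x : V → ℝ)
    (h : ∑ i, ∑ j, w i j * (x i - x j)^2 = 0) :
    ∀ i j, 0 < w i j → x i = x j := by
  intro i j hw
  have hnn : ∀ i j : V, 0 ≤ w i j * (x i - x j)^2 :=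
    fun i j => mul_nonneg (hnonneg i j) (sq_nonneg _)
  have hnn' : ∀ i : V, 0 ≤ ∑ j, w i j * (x i - x j)^2 :=
    fun i => Finset.sum_nonneg fun j _ => hnn i j
  have h1 : ∀ i ∈ Finset.univ, ∑ j, w i j * (x i - x j)^2 = 0 :=
    (Finset.sum_eq_zero_iff_of_nonneg (fun i _ => hnn' i)).1 h
  have h2 : w i j * (x i - x j)^2 = 0 :=
    (Finset.sum_eq_zero_iff_of_nonneg (fun j _ => hnn i j)).1
      (h1 i (Finset.mem_univ i)) j (Finset.mem_univ j)
  rcases mul_eq_zero.1 h2 with h3 | h3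
  · exact absurd h3 (ne_of_gt hw)
  · have := pow_eq_zero_iff (n := 2) (by norm_num) |>.1 h3
    linarith [this]

lemma ker_const (w : V → V → ℝ) (hsym : ∀ i j, w i j = w j i)
    (hnonneg : ∀ i j, 0 ≤ w i j) (hdiag : ∀ i, w i i = 0) (k : V → ℝ)
    (hk : (lapMatrix w).mulVec k = 0) :
    ∀ i j, 0 < w i j → k i = k j := by
  have h0 : k ⬝ᵥ (lapMatrix w).mulVec k = 0 := by rw [hk]; simp
  rw [lap_quad w hsym hdiag] at h0
  have : ∑ i, ∑ j, w i j * (k i - k j)^2 = 0 := by linarith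
  exact quad_zero w hnonneg k this

lemma connected_const (w : V → V → ℝ)
    (hconn : (SimpleGraph.fromRel fun i j => 0 < w i j).Connected)
    (x : V → ℝ) (hx : ∀ i j, 0 < w i j → x i = x j) :
    ∀ i j, x i = x j := by
  intro i j
  have hr := hconn.preconnected i j
  rcases hr with ⟨p⟩
  induction p with
  | nil => rfl
  | cons h p ih =>
    rename_i u v c
    have : x u = x v := by
      rcases h with ⟨hne, h | h⟩
      · exact hx u v h
      · exact (hx v u h).symm
    exact this.trans ih

lemma lap_add (w1 w2 : V → V → ℝ) :
    lapMatrix (fun i j => w1 i j + w2 i j) = lapMatrix w1 + lapMatrix w2 := by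
  ext i j
  rw [Matrix.add_apply]
  unfold lapMatrix
  by_cases h : i = j <;> simp [h, Finset.sum_add_distrib] <;> ring

lemma lap_const_mulVec (w : V → V → ℝ) (hdiag : ∀ i, w i i = 0) (c : ℝ) :
    (lapMatrix w).mulVec (fun _ => c) = 0 := by
  funext i
  simp [lap_mulVec w hdiag]

lemma deleteEdge_sym (w : V → V → ℝ) (hsym : ∀ i j, w i j = w j i) (e : V × V) :
    ∀ i j, deleteEdge w e i j = deleteEdge w e j i := by
  intro i j
  unfold deleteEdge
  by_cases h : (i = e.1 ∧ j = e.2) ∨ (i = e.2 ∧ j = e.1)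
  · rw [if_pos h, if_pos (by tauto)]
  · rw [if_neg h, if_neg (by tauto), hsym]

lemma deleteEdge_nonneg (w : V → V → ℝ) (hnonneg : ∀ i j, 0 ≤ w i j) (e : V × V) :
    ∀ i j, 0 ≤ deleteEdge w e i j := by
  intro i j
  unfold deleteEdge
  split <;> simp [hnonneg]

lemma deleteEdge_diag (w : V → V → ℝ) (hdiag : ∀ i, w i i = 0) (e : V × V) :
    ∀ i, deleteEdge w e i i = 0 := by
  intro i
  unfold deleteEdge
  split <;> simp [hdiag]

/-- Decomposition of the weight into deleted weight plus edge weight. -/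
lemma weight_decomp (w : V → V → ℝ) (hsym : ∀ i j, w i j = w j i)
    (a b : V) (hab : a ≠ b) :
    w = fun i j => deleteEdge w (a, b) i j
      + (if (i = a ∧ j = b) ∨ (i = b ∧ j = a) then w a b else 0) := by
  funext i j
  unfold deleteEdge
  by_cases h : (i = a ∧ j = b) ∨ (i = b ∧ j = a)
  · rw [if_pos h, if_pos h, zero_add]
    rcases h with ⟨h1, h2⟩ | ⟨h1, h2⟩
    · rw [h1, h2]
    · rw [h1, h2, hsym b a]
  · simp [h]

/-- mulVec of the Laplacian of the single-edge weight. -/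
lemma lap_single_edge (a b : V) (hab : a ≠ b) (c : ℝ) (x : V → ℝ) :
    (lapMatrix (fun i j => if (i = a ∧ j = b) ∨ (i = b ∧ j = a) then c else 0)).mulVec x
      = fun i => c * (x a - x b) * dirac a b i := by
  set u : V → V → ℝ := fun i j => if (i = a ∧ j = b) ∨ (i = b ∧ j = a) then c else 0 with hu
  have hud : ∀ i, u i i = 0 := by
    intro i
    simp only [hu]
    rw [if_neg]
    rintro (⟨h1, h2⟩ | ⟨h1, h2⟩) <;> exact hab (h1 ▸ h2 ▸ rfl)
  funext i
  rw [lap_mulVec u hud]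
  have hrow : ∀ j, u i j = if i = a then (if j = b then c else 0)
      else if i = b then (if j = a then c else 0) else 0 := by
    intro j
    simp only [hu]
    by_cases hia : i = a <;> by_cases hib : i = b <;>
      by_cases hja : j = a <;> by_cases hjb : j = b <;> simp_all
  by_cases hia : i = a
  · subst hia
    simp [hrow, dirac, hab, Finset.sum_ite_eq']
    ring
  · by_cases hib : i = b
    · subst hib
      simp [hrow, dirac, hia, Finset.sum_ite_eq']
      ring
    · simp [hrow, dirac, hia, hib]

lemma sum_edges (w : V → V → ℝ) (hsym : ∀ i j, w i j = w j i)
    (hnonneg : ∀ i j, 0 ≤ w i j)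
    (E : Finset (V × V))
    (hE : ∀ i j : V, 0 < w i j →
      ((i, j) ∈ E ∧ (j, i) ∉ E) ∨ ((j, i) ∈ E ∧ (i, j) ∉ E))
    (hEw : ∀ e ∈ E, 0 < w e.1 e.2)
    (F : V → V → ℝ) (hF : ∀ i j, F i j = F j i) :
    ∑ e ∈ E, w e.1 e.2 * F e.1 e.2 = (1/2) * ∑ i, ∑ j, w i j * F i j := by
  have h1 : ∑ i, ∑ j, w i j * F i j
      = ∑ p ∈ Finset.univ ×ˢ Finset.univ, w p.1 p.2 * F p.1 p.2 := by
    rw [Finset.sum_product]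
  have hsub : E ∪ E.image Prod.swap ⊆ Finset.univ ×ˢ Finset.univ := by
    intro p _; simp
  have h2 : ∑ p ∈ Finset.univ ×ˢ Finset.univ, w p.1 p.2 * F p.1 p.2
      = ∑ p ∈ E ∪ E.image Prod.swap, w p.1 p.2 * F p.1 p.2 := by
    refine (Finset.sum_subset hsub ?_).symm
    intro p _ hp
    have hw : ¬ 0 < w p.1 p.2 := by
      intro hpos
      rcases hE p.1 p.2 hpos with ⟨h3, _⟩ | ⟨h3, _⟩
      · exact hp (Finset.mem_union_left _ h3)
      · refine hp (Finset.mem_union_right _ ?_)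
        exact Finset.mem_image.2 ⟨(p.2, p.1), h3, rfl⟩
    have : w p.1 p.2 = 0 := le_antisymm (not_lt.1 hw) (hnonneg _ _)
    rw [this, zero_mul]
  have hdisj : Disjoint E (E.image Prod.swap) := by
    rw [Finset.disjoint_left]
    intro p hpE hpI
    rcases Finset.mem_image.1 hpI with ⟨q, hqE, hq⟩
    have hq' : (p.2, p.1) ∈ E := by
      rw [← hq]; simpa using hqE
    rcases hE p.1 p.2 (hEw p hpE) with ⟨_, h4⟩ | ⟨_, h4⟩
    · exact h4 hq'
    · exact h4 hpE
  have h3 : ∑ p ∈ E.image Prod.swap, w p.1 p.2 * F p.1 p.2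
      = ∑ e ∈ E, w e.1 e.2 * F e.1 e.2 := by
    rw [Finset.sum_image (fun q1 _ q2 _ h => Prod.swap_injective h)]
    exact Finset.sum_congr rfl fun q _ => by simp [hsym q.2 q.1, hF q.2 q.1]
  rw [h1, h2, Finset.sum_union hdisj, h3]
  ring

lemma exists_kernel_sep (A : Matrix V V ℝ) (hA : Aᵀ = A) (d : V → ℝ)
    (h : ¬∃ g, A.mulVec g = d) :
    ∃ k : V → ℝ, A.mulVec k = 0 ∧ k ⬝ᵥ d ≠ 0 := by
  have hd : d ∉ LinearMap.range A.mulVecLin := by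
    rintro ⟨g, hg⟩
    exact h ⟨g, by simpa using hg⟩
  obtain ⟨φ, hφd, hφ0⟩ :=
    Submodule.exists_dual_map_eq_bot_of_notMem hd inferInstance
  set k : V → ℝ := fun i => φ (Pi.single i 1) with hk
  have hφeq : ∀ x : V → ℝ, φ x = ∑ i, x i * k i := by
    intro x
    have hx : x = ∑ i, x i • (Pi.single i 1 : V → ℝ) := by
      funext j
      simp [Finset.sum_apply, Pi.single_apply]
    conv_lhs => rw [hx]
    rw [map_sum]
    exact Finset.sum_congr rfl fun i _ => by simp [hk]
  have hker : ∀ x, φ (A.mulVec x) = 0 := by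
    intro x
    have hmem : A.mulVec x ∈ LinearMap.range A.mulVecLin := ⟨x, by simp⟩
    have h2 : φ (A.mulVec x) ∈ Submodule.map φ (LinearMap.range A.mulVecLin) :=
      Submodule.mem_map_of_mem hmem
    rw [hφ0] at h2
    exact (Submodule.mem_bot ℝ).1 h2
  have hvec : ∀ j, ∑ i, A i j * k i = 0 := by
    intro j
    have h1 := hker (Pi.single j 1)
    rw [hφeq] at h1
    simpa [Matrix.mulVec_single] using h1
  refine ⟨k, ?_, ?_⟩
  · funext i
    have hAij : ∀ i j, A i j = A j i := fun i j =>
      (Matrix.transpose_apply A j i).symm.trans (congrFun (congrFun hA j) i)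
    have : (A.mulVec k) i = ∑ j, A j i * k j := by
      show ∑ j, A i j * k j = ∑ j, A j i * k j
      exact Finset.sum_congr rfl fun j _ => by rw [hAij]
    rw [this, hvec i]; rfl
  · intro hc
    apply hφd
    rw [hφeq]
    simpa [dotProduct, mul_comm] using hc

lemma dirac_dot (a b : V) (y : V → ℝ) : dirac a b ⬝ᵥ y = y a - y b := by
  unfold dirac dotProduct
  rw [Finset.sum_congr rfl (fun v _ => show
      ((if v = a then (1:ℝ) else 0) - if v = b then 1 else 0) * y v
        = (if v = a then y v else 0) - (if v = b then y v else 0) from by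
    simp only [sub_mul, ite_mul, one_mul, zero_mul])]
  rw [Finset.sum_sub_distrib]
  simp [Finset.sum_ite_eq']

lemma dot_dirac (a b : V) (y : V → ℝ) : y ⬝ᵥ dirac a b = y a - y b := by
  rw [dotProduct_comm, dirac_dot]

lemma sum_dirac (a b : V) : ∑ v, dirac a b v = 0 := by
  have := dirac_dot a b (fun _ => (1:ℝ))
  simp only [dotProduct, mul_one] at this
  simpa using this

lemma mulVec_dirac (M : Matrix V V ℝ) (a b i : V) :
    (M.mulVec (dirac a b)) i = M i a - M i b := by
  show (fun j => M i j) ⬝ᵥ dirac a b = _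
  rw [dot_dirac]
theorem canonical_measure_total_mass
    {V : Type} [Fintype V] [DecidableEq V]
    (w : V → V → ℝ)
    (hsym : ∀ i j, w i j = w j i)
    (hnonneg : ∀ i j, 0 ≤ w i j)
    (hdiag : ∀ i, w i i = 0)
    (hconn : (SimpleGraph.fromRel fun i j => 0 < w i j).Connected)
    (E : Finset (V × V))
    (hE : ∀ i j : V, 0 < w i j →
      ((i, j) ∈ E ∧ (j, i) ∉ E) ∨ ((j, i) ∈ E ∧ (i, j) ∉ E))
    (hEw : ∀ e ∈ E, 0 < w e.1 e.2)
    (L : V × V → ℝ) (hL : ∀ e ∈ E, L e = 1 / w e.1 e.2) :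
    ∑ e ∈ E,
      (if h : ∃ g : V → ℝ,
          (lapMatrix (deleteEdge w e)).mulVec g = dirac e.1 e.2 then
        L e / ((Classical.choose h e.1 - Classical.choose h e.2) + L e)
      else 0)
      = 1 + (E.card : ℝ) - (Fintype.card V : ℝ) := by
  classical
  haveI : Nonempty V := hconn.nonempty
  set n : ℝ := (Fintype.card V : ℝ) with hn
  have hnpos : 0 < n := by
    rw [hn]
    exact_mod_cast Fintype.card_pos
  set Q : Matrix V V ℝ := lapMatrix w with hQ
  set J : Matrix V V ℝ := Matrix.of fun _ _ => (1:ℝ) with hJ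
  set N : Matrix V V ℝ := Q + J with hN
  have hQsym : Qᵀ = Q := lap_transpose w hsym
  have hNsym : Nᵀ = N := by
    rw [hN, Matrix.transpose_add, hQsym]
    congr 1
  -- J *ᵥ x is the constant vector of coordinate-sum
  have hJmul : ∀ x : V → ℝ, J.mulVec x = fun _ => ∑ v, x v := by
    intro x
    funext i
    simp [hJ, Matrix.mulVec, dotProduct]
  -- N has injective mulVec
  have hNinj : Function.Injective N.mulVec := by
    have hker : ∀ x : V → ℝ, N.mulVec x = 0 → x = 0 := by
      intro x hx
      have h0 : x ⬝ᵥ N.mulVec x = 0 := by rw [hx]; simp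
      rw [hN, Matrix.add_mulVec, dotProduct_add] at h0
      have hQx : x ⬝ᵥ Q.mulVec x = (1/2) * ∑ i, ∑ j, w i j * (x i - x j)^2 :=
        lap_quad w hsym hdiag x
      have hJx : x ⬝ᵥ J.mulVec x = (∑ v, x v)^2 := by
        rw [hJmul]
        unfold dotProduct
        rw [← Finset.sum_mul]
        ring
      have hQnn : 0 ≤ x ⬝ᵥ Q.mulVec x := by
        rw [hQx]
        have : 0 ≤ ∑ i, ∑ j, w i j * (x i - x j)^2 :=
          Finset.sum_nonneg fun i _ => Finset.sum_nonneg fun j _ =>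
            mul_nonneg (hnonneg i j) (sq_nonneg _)
        linarith
      have hJnn : 0 ≤ x ⬝ᵥ J.mulVec x := by rw [hJx]; positivity
      have hQ0 : x ⬝ᵥ Q.mulVec x = 0 := by linarith
      have hJ0 : x ⬝ᵥ J.mulVec x = 0 := by linarith
      have hconst : ∀ i j, x i = x j := by
        apply connected_const w hconn
        apply quad_zero w hnonneg
        rw [hQx] at hQ0
        linarith
      have hsum0 : ∑ v, x v = 0 := by
        rw [hJx] at hJ0
        exact pow_eq_zero_iff (by norm_num) |>.1 hJ0
      funext i
      have : ∑ v, x v = (Fintype.card V : ℝ) * x i := by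
        rw [Finset.sum_congr rfl (fun v _ => hconst v i)]
        simp [mul_comm]
      rw [this] at hsum0
      have : x i = 0 := by
        rcases mul_eq_zero.1 hsum0 with h | h
        · exact absurd h (by exact_mod_cast Fintype.card_pos.ne')
        · exact h
      simpa using this
    intro x y hxy
    have : N.mulVec (x - y) = 0 := by
      rw [Matrix.mulVec_sub, hxy, sub_self]
    have := hker _ this
    exact sub_eq_zero.1 this
  have hdet : IsUnit N.det := (Matrix.isUnit_iff_isUnit_det N).1 (Matrix.mulVec_injective_iff_isUnit.1 hNinj)
  set M : Matrix V V ℝ := N⁻¹ with hM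
  have hNM : N * M = 1 := Matrix.mul_nonsing_inv N hdet
  have hMN : M * N = 1 := Matrix.nonsing_inv_mul N hdet
  have hMsym : Mᵀ = M := by
    rw [hM, Matrix.transpose_nonsing_inv, hNsym]
  -- row sums of M are 1/n
  have hNone : N.mulVec (fun _ => (1:ℝ)/n) = fun _ => 1 := by
    rw [hN, Matrix.add_mulVec, lap_const_mulVec w hdiag, hJmul]
    funext i
    simp
    rw [← hn]; exact mul_inv_cancel₀ hnpos.ne'
  have hMone : M.mulVec (fun _ => (1:ℝ)) = fun _ => 1/n := by
    have : M.mulVec (N.mulVec (fun _ => (1:ℝ)/n)) = fun _ => (1:ℝ)/n := by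
      rw [Matrix.mulVec_mulVec, hMN]
      simp [Matrix.one_mulVec]
    rw [hNone] at this
    exact this
  have hMrow : ∀ i, ∑ j, M i j = 1/n := by
    intro i
    have := congrFun hMone i
    simpa [Matrix.mulVec, dotProduct] using this
  have hMij : ∀ i j, M i j = M j i := fun i j =>
    (Matrix.transpose_apply M j i).symm.trans (congrFun (congrFun hMsym j) i)
  -- the resistance kernel
  set F : V → V → ℝ := fun i j => M i i + M j j - M i j - M j i with hF
  have hFsym : ∀ i j, F i j = F j i := by
    intro i j
    simp only [hF]
    ring
  have hterm : ∀ e ∈ E,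
      (if h : ∃ g : V → ℝ,
          (lapMatrix (deleteEdge w e)).mulVec g = dirac e.1 e.2 then
        L e / ((Classical.choose h e.1 - Classical.choose h e.2) + L e)
      else 0) = 1 - w e.1 e.2 * F e.1 e.2 := by
    intro e he
    have hwe : 0 < w e.1 e.2 := hEw e he
    have hab : e.1 ≠ e.2 := by
      intro hcontra
      rw [hcontra, hdiag] at hwe
      exact lt_irrefl 0 hwe
    set Q' : Matrix V V ℝ := lapMatrix (deleteEdge w e) with hQ'
    have hQ'sym : Q'ᵀ = Q' := lap_transpose _ (deleteEdge_sym w hsym e)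
    have hQ'nonneg := deleteEdge_nonneg w hnonneg e
    have hQ'diag := deleteEdge_diag w hdiag e
    have hsplit : ∀ x : V → ℝ, Q.mulVec x
        = Q'.mulVec x + fun i => w e.1 e.2 * (x e.1 - x e.2) * dirac e.1 e.2 i := by
      intro x
      have hww := weight_decomp w hsym e.1 e.2 hab
      rw [Prod.mk.eta] at hww
      calc Q.mulVec x
          = (lapMatrix (fun i j => deleteEdge w e i j
            + (if (i = e.1 ∧ j = e.2) ∨ (i = e.2 ∧ j = e.1)
                then w e.1 e.2 else 0))).mulVec x := by rw [hQ, ← hww]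
        _ = Q'.mulVec x + (lapMatrix fun i j =>
              if (i = e.1 ∧ j = e.2) ∨ (i = e.2 ∧ j = e.1)
                then w e.1 e.2 else 0).mulVec x := by
            rw [lap_add, Matrix.add_mulVec]
        _ = _ := by rw [lap_single_edge e.1 e.2 hab]
    set δ : V → ℝ := dirac e.1 e.2 with hδ
    set f : V → ℝ := M.mulVec δ with hf
    have hsumf : ∑ v, f v = 0 := by
      have h1 : ∑ v, f v = ∑ v, ∑ j, M v j * δ j := rfl
      have h2 : ∀ j, ∑ v, M v j * δ j = (1/n) * δ j := by
        intro j
        rw [← Finset.sum_mul]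
        congr 1
        rw [Finset.sum_congr rfl fun v _ => hMij v j, hMrow j]
      rw [h1, Finset.sum_comm, Finset.sum_congr rfl fun j _ => h2 j,
        ← Finset.mul_sum, hδ, sum_dirac, mul_zero]
    have hQf : Q.mulVec f = δ := by
      have h1 : N.mulVec f = δ := by
        rw [hf, Matrix.mulVec_mulVec, hNM, Matrix.one_mulVec]
      have h2 : J.mulVec f = 0 := by
        rw [hJmul f]
        funext i
        simp [hsumf]
      have h3 : Q.mulVec f + J.mulVec f = δ := by
        rw [← Matrix.add_mulVec, ← hN, h1]
      rw [h2, add_zero] at h3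
      exact h3
    have hr : f e.1 - f e.2 = F e.1 e.2 := by
      have h1 : f e.1 = M e.1 e.1 - M e.1 e.2 := mulVec_dirac M e.1 e.2 e.1
      have h2 : f e.2 = M e.2 e.1 - M e.2 e.2 := mulVec_dirac M e.1 e.2 e.2
      rw [h1, h2]
      simp only [hF]
      ring
    by_cases h : ∃ g : V → ℝ,
        (lapMatrix (deleteEdge w e)).mulVec g = dirac e.1 e.2
    · rw [dif_pos h]
      set g := Classical.choose h with hg
      have hgspec : Q'.mulVec g = δ := Classical.choose_spec h
      have hRnn : 0 ≤ g e.1 - g e.2 := by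
        have h1 : g ⬝ᵥ Q'.mulVec g = g ⬝ᵥ δ := by rw [hgspec]
        rw [hQ', lap_quad _ (deleteEdge_sym w hsym e) hQ'diag, hδ, dot_dirac] at h1
        have h2 : 0 ≤ ∑ i, ∑ j, deleteEdge w e i j * (g i - g j)^2 :=
          Finset.sum_nonneg fun i _ => Finset.sum_nonneg fun j _ =>
            mul_nonneg (hQ'nonneg i j) (sq_nonneg _)
        linarith
      have hQ'f : Q'.mulVec f = fun i => (1 - w e.1 e.2 * (f e.1 - f e.2)) * δ i := by
        funext i
        have h5 := congrFun (hsplit f) i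
        rw [hQf] at h5
        simp only [Pi.add_apply] at h5
        have : δ i = Q'.mulVec f i + w e.1 e.2 * (f e.1 - f e.2) * δ i := h5
        linarith
      set kv : V → ℝ := f - (1 - w e.1 e.2 * (f e.1 - f e.2)) • g with hkv
      have hkv0 : Q'.mulVec kv = 0 := by
        rw [hkv, Matrix.mulVec_sub, Matrix.mulVec_smul, hQ'f, hgspec]
        funext i
        simp
      have hdot : δ ⬝ᵥ kv = 0 := by
        rw [← hgspec, dotProduct_comm, Matrix.dotProduct_mulVec]
        have hvm : kv ᵥ* Q' = 0 := by
          rw [← hQ'sym, Matrix.vecMul_transpose, hkv0]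
        rw [hvm]
        simp
      have hrel : (f e.1 - f e.2)
          - (1 - w e.1 e.2 * (f e.1 - f e.2)) * (g e.1 - g e.2) = 0 := by
        have h6 : δ ⬝ᵥ kv = kv e.1 - kv e.2 := dirac_dot e.1 e.2 kv
        rw [hdot] at h6
        have h7 : kv e.1 = f e.1 - (1 - w e.1 e.2 * (f e.1 - f e.2)) * g e.1 := rfl
        have h8 : kv e.2 = f e.2 - (1 - w e.1 e.2 * (f e.1 - f e.2)) * g e.2 := rfl
        rw [h7, h8] at h6
        linarith
      have hLe : L e = 1 / w e.1 e.2 := hL e he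
      have hLpos : 0 < L e := by
        rw [hLe]
        positivity
      have hden : 0 < (g e.1 - g e.2) + L e := by linarith
      have hwL : w e.1 e.2 * L e = 1 := by
        rw [hLe]
        field_simp
      rw [← hr]
      have key : (1 - w e.1 e.2 * (f e.1 - f e.2)) * ((g e.1 - g e.2) + L e) = L e := by
        linear_combination -hrel - (f e.1 - f e.2) * hwL
      calc L e / ((g e.1 - g e.2) + L e)
          = ((1 - w e.1 e.2 * (f e.1 - f e.2)) * ((g e.1 - g e.2) + L e))
            / ((g e.1 - g e.2) + L e) := by rw [key]
        _ = 1 - w e.1 e.2 * (f e.1 - f e.2) :=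
            mul_div_cancel_right₀ _ (ne_of_gt hden)
    · rw [dif_neg h]
      obtain ⟨k, hk0, hkd⟩ := exists_kernel_sep Q' hQ'sym δ h
      have h7 : k ⬝ᵥ δ = w e.1 e.2 * (f e.1 - f e.2) * (k ⬝ᵥ δ) := by
        calc k ⬝ᵥ δ = k ⬝ᵥ Q.mulVec f := by rw [hQf]
          _ = k ⬝ᵥ (Q'.mulVec f
              + fun i => w e.1 e.2 * (f e.1 - f e.2) * δ i) := by rw [hsplit f]
          _ = k ⬝ᵥ Q'.mulVec f
              + k ⬝ᵥ (fun i => w e.1 e.2 * (f e.1 - f e.2) * δ i) :=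
            dotProduct_add _ _ _
          _ = w e.1 e.2 * (f e.1 - f e.2) * (k ⬝ᵥ δ) := by
            have ha : k ⬝ᵥ Q'.mulVec f = 0 := by
              rw [Matrix.dotProduct_mulVec, ← hQ'sym, Matrix.vecMul_transpose, hk0]
              simp
            have hb : k ⬝ᵥ (fun i => w e.1 e.2 * (f e.1 - f e.2) * δ i)
                = w e.1 e.2 * (f e.1 - f e.2) * (k ⬝ᵥ δ) := by
              unfold dotProduct
              rw [Finset.mul_sum]
              exact Finset.sum_congr rfl fun i _ => by ring
            rw [ha, hb, zero_add]
      have h8 : w e.1 e.2 * (f e.1 - f e.2) = 1 := by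
        have h9 : (k ⬝ᵥ δ) * (1 - w e.1 e.2 * (f e.1 - f e.2)) = 0 := by
          linear_combination h7
        rcases mul_eq_zero.1 h9 with h10 | h10
        · exact absurd h10 hkd
        · linarith
      rw [← hr]
      linarith
  rw [Finset.sum_congr rfl hterm, Finset.sum_sub_distrib, Finset.sum_const,
    nsmul_eq_mul, mul_one]
  have hfoster : ∑ e ∈ E, w e.1 e.2 * F e.1 e.2 = n - 1 := by
    rw [sum_edges w hsym hnonneg E hE hEw F hFsym]
    have hswap : ∑ i, ∑ j, w i j * (M j j - M i j)
        = ∑ i, ∑ j, w i j * (M i i - M j i) := by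
      rw [Finset.sum_comm]
      exact Finset.sum_congr rfl fun i _ => Finset.sum_congr rfl fun j _ => by
        rw [hsym j i]
    have hhalf : ∑ i, ∑ j, w i j * F i j
        = 2 * ∑ i, ∑ j, w i j * (M i i - M j i) := by
      calc ∑ i, ∑ j, w i j * F i j
          = ∑ i, ∑ j, (w i j * (M i i - M j i) + w i j * (M j j - M i j)) := by
            refine Finset.sum_congr rfl fun i _ => Finset.sum_congr rfl fun j _ => ?_
            simp only [hF]
            ring
        _ = (∑ i, ∑ j, w i j * (M i i - M j i))
            + ∑ i, ∑ j, w i j * (M j j - M i j) := by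
            simp [Finset.sum_add_distrib]
        _ = 2 * ∑ i, ∑ j, w i j * (M i i - M j i) := by rw [hswap]; ring
    have hQMii : ∀ i, (Q * M) i i = ∑ j, w i j * (M i i - M j i) := by
      intro i
      have h1 : (Q * M) i i = (Q.mulVec (fun j => M j i)) i := by
        rw [Matrix.mul_apply]
        rfl
      rw [h1, hQ, lap_mulVec w hdiag, ← Finset.sum_sub_distrib]
      exact Finset.sum_congr rfl fun j _ => by ring
    have htrace : Matrix.trace (Q * M) = ∑ i, ∑ j, w i j * (M i i - M j i) := by
      unfold Matrix.trace Matrix.diag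
      exact Finset.sum_congr rfl fun i _ => hQMii i
    have hJM : Matrix.trace (J * M) = 1 := by
      unfold Matrix.trace Matrix.diag
      have h1 : ∀ i, (J * M) i i = ∑ j, M j i := by
        intro i
        rw [Matrix.mul_apply]
        exact Finset.sum_congr rfl fun j _ => by simp [hJ]
      rw [Finset.sum_congr rfl fun i _ => h1 i, Finset.sum_comm,
        Finset.sum_congr rfl fun i _ => hMrow i, Finset.sum_const, nsmul_eq_mul, Finset.card_univ, ← hn]
      field_simp
    have hQNJ : Q = N - J := eq_sub_of_add_eq hN.symm
    have htr2 : Matrix.trace (Q * M) = n - 1 := by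
      rw [hQNJ, Matrix.sub_mul, Matrix.trace_sub, hNM, Matrix.trace_one, hJM, ← hn]
    rw [hhalf, ← htrace, htr2]
    ring
  rw [hfoster]
  ring
end
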